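/- For every real z with 0 < |z| < 1/4, the series ∑_{x=0}^∞ C(2x+1, x)·z^x converges (HasSum) to ((1 − 4z)^{−1/2} − 1)/(2z); equivalently, 2z·∑_{x=0}^∞ C(2x+1, x)·z^x = (1 − 4z)^{−1/2} − 1. -/
import Mathlib

open Finset

private noncomputable def cb (k : ℕ) : ℝ := (Nat.centralBinom k : ℝ)

private lemma cb_pos (k : ℕ) : 0 < cb k := by
  unfold cb
  exact_mod_cast Nat.centralBinom_pos k

private lemma cb_rec (k : ℕ) : ((k : ℝ) + 1) * cb (k + 1) = 2 * (2 * k + 1) * cb k := by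
  have := Nat.succ_mul_centralBinom_succ k
  have := congrArg (fun n : ℕ => (n : ℝ)) this
  push_cast at this
  simpa [cb] using this

private lemma cb_le_four_mul (k : ℕ) : cb (k + 1) ≤ 4 * cb k := by
  have h := cb_rec k
  have hk : (0:ℝ) < (k:ℝ) + 1 := by positivity
  nlinarith [cb_pos k, cb_pos (k+1)]

private lemma cb_le_four_pow (n : ℕ) : cb n ≤ 4 ^ n := by
  induction n with
  | zero => simp [cb, Nat.centralBinom]
  | succ n ih =>
    calc cb (n+1) ≤ 4 * cb n := cb_le_four_mul n
    _ ≤ 4 * 4 ^ n := by linarith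
    _ = 4 ^ (n+1) := by ring

private lemma sum_reflect (m : ℕ) (f : ℕ → ℝ) :
    ∑ k ∈ range (m + 1), f (m - k) = ∑ k ∈ range (m + 1), f k := by
  simpa using Finset.sum_range_reflect f (m + 1)

private lemma weight_sum (m : ℕ) (w t : ℕ → ℝ) (c : ℝ)
    (ht : ∀ k ≤ m, t (m - k) = t k) (hw : ∀ k ≤ m, w k + w (m - k) = c) :
    2 * ∑ k ∈ range (m + 1), w k * t k = c * ∑ k ∈ range (m + 1), t k := by
  have h1 : ∑ k ∈ range (m + 1), w (m - k) * t (m - k)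
      = ∑ k ∈ range (m + 1), w k * t k := sum_reflect m (fun k => w k * t k)
  calc 2 * ∑ k ∈ range (m + 1), w k * t k
      = ∑ k ∈ range (m + 1), w k * t k
        + ∑ k ∈ range (m + 1), w (m - k) * t (m - k) := by rw [h1]; ring
    _ = ∑ k ∈ range (m + 1), (w k + w (m - k)) * t k := by
        rw [← Finset.sum_add_distrib]
        refine Finset.sum_congr rfl fun k hk => ?_
        have hk' : k ≤ m := by
          have := Finset.mem_range.mp hk; omega
        rw [ht k hk']; ring
    _ = c * ∑ k ∈ range (m + 1), t k := by
        rw [Finset.mul_sum]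
        refine Finset.sum_congr rfl fun k hk => ?_
        have hk' : k ≤ m := by
          have := Finset.mem_range.mp hk; omega
        rw [hw k hk']

private lemma conv_succ (m : ℕ) :
    ∑ k ∈ range (m + 2), cb k * cb (m + 1 - k)
      = 4 * ∑ k ∈ range (m + 1), cb k * cb (m - k) := by
  set S : ℝ := ∑ k ∈ range (m + 1), cb k * cb (m - k) with hS
  set S' : ℝ := ∑ k ∈ range (m + 2), cb k * cb (m + 1 - k) with hS'
  have hA : 2 * ∑ k ∈ range (m + 1), (2 * (k:ℝ) + 1) * (cb k * cb (m - k))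
      = (2 * (m:ℝ) + 2) * S := by
    refine weight_sum m _ _ _ (fun k hk => ?_) (fun k hk => ?_)
    · have : m - (m - k) = k := by omega
      rw [this, mul_comm]
    · have : ((m - k : ℕ) : ℝ) = (m : ℝ) - k := by
        rw [Nat.cast_sub hk]
      rw [this]; ring
  have hB : 2 * ∑ k ∈ range (m + 2), ((k:ℝ)) * (cb k * cb (m + 1 - k))
      = ((m:ℝ) + 1) * S' := by
    refine weight_sum (m + 1) _ _ _ (fun k hk => ?_) (fun k hk => ?_)
    · have : m + 1 - (m + 1 - k) = k := by omega
      rw [this, mul_comm]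
    · have : ((m + 1 - k : ℕ) : ℝ) = (m : ℝ) + 1 - k := by
        rw [Nat.cast_sub hk]; push_cast; ring
      rw [this]; ring
  have hR : ∑ k ∈ range (m + 2), ((k:ℝ)) * (cb k * cb (m + 1 - k))
      = ∑ k ∈ range (m + 1), ((k:ℝ) + 1) * (cb (k + 1) * cb (m - k)) := by
    rw [Finset.sum_range_succ' (fun k => ((k:ℝ)) * (cb k * cb (m + 1 - k))) (m + 1)]
    simp [Nat.succ_sub_succ]
  have hrec : ∑ k ∈ range (m + 1), ((k:ℝ) + 1) * (cb (k + 1) * cb (m - k))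
      = 2 * ∑ k ∈ range (m + 1), (2 * (k:ℝ) + 1) * (cb k * cb (m - k)) := by
    rw [Finset.mul_sum]
    refine Finset.sum_congr rfl fun k hk => ?_
    have h := cb_rec k
    calc ((k:ℝ) + 1) * (cb (k + 1) * cb (m - k))
        = (((k:ℝ) + 1) * cb (k + 1)) * cb (m - k) := by ring
      _ = (2 * (2 * k + 1) * cb k) * cb (m - k) := by rw [h]
      _ = 2 * ((2 * (k:ℝ) + 1) * (cb k * cb (m - k))) := by ring
  have hm1 : ((m:ℝ) + 1) ≠ 0 := by positivity
  have : ((m:ℝ) + 1) * S' = ((m:ℝ) + 1) * (4 * S) := by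
    rw [← hB, hR, hrec, hA]; ring
  exact mul_left_cancel₀ hm1 this

private lemma conv_eq (n : ℕ) :
    ∑ k ∈ range (n + 1), cb k * cb (n - k) = 4 ^ n := by
  induction n with
  | zero => simp [cb, Nat.centralBinom]
  | succ n ih => rw [conv_succ n, ih]; ring

private lemma choose_eq (x : ℕ) : Nat.centralBinom (x + 1) = 2 * Nat.choose (2 * x + 1) x := by
  unfold Nat.centralBinom
  have h1 : 2 * (x + 1) = (2 * x + 1) + 1 := by ring
  rw [h1, Nat.choose_succ_succ]
  have h2 : (2 * x + 1).choose (x + 1) = (2 * x + 1).choose x := by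
    have := Nat.choose_symm (n := 2 * x + 1) (k := x) (by omega)
    have hx : 2 * x + 1 - x = x + 1 := by omega
    rw [hx] at this
    exact this
  simp only [Nat.succ_eq_add_one]
  omega

/-- `∑_{x=0}^∞ C(2x+1, x) z^x = ((1 - 4z)^{-1/2} - 1)/(2z)` for `0 < |z| < 1/4`;
equivalently `2z ∑_x C(2x+1, x) z^x = (1 - 4z)^{-1/2} - 1`. -/
theorem central_binomial_variant_gf (z : ℝ) (hz : 0 < |z|) (hz' : |z| < 1 / 4) :
    HasSum (fun x : ℕ => (Nat.choose (2 * x + 1) x : ℝ) * z ^ x)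
      (((1 - 4 * z) ^ (-(1 : ℝ) / 2) - 1) / (2 * z)) ∧
    2 * z * ∑' x : ℕ, (Nat.choose (2 * x + 1) x : ℝ) * z ^ x
      = (1 - 4 * z) ^ (-(1 : ℝ) / 2) - 1 := by
  have hz0 : z ≠ 0 := by
    intro h; rw [h] at hz; simp at hz
  have h4 : 4 * |z| < 1 := by linarith
  have h4' : ‖4 * z‖ < 1 := by
    rw [Real.norm_eq_abs, abs_mul]
    simpa using h4
  have h1z : 0 < 1 - 4 * z := by
    have : 4 * z ≤ |4 * z| := le_abs_self _
    rw [abs_mul] at this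
    simp at this
    linarith
  -- summability
  have hnorm : Summable (fun n : ℕ => ‖cb n * z ^ n‖) := by
    refine Summable.of_nonneg_of_le (fun n => norm_nonneg _) (fun n => ?_)
      (summable_geometric_of_lt_one (by positivity) h4)
    rw [Real.norm_eq_abs, abs_mul, abs_pow, abs_of_pos (cb_pos n), mul_pow]
    exact mul_le_mul_of_nonneg_right (cb_le_four_pow n) (by positivity)
  have hsum : Summable (fun n : ℕ => cb n * z ^ n) := hnorm.of_norm
  set S : ℝ := ∑' n : ℕ, cb n * z ^ n with hSdef
  -- S * S = (1 - 4z)⁻¹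
  have hsq : S * S = (1 - 4 * z)⁻¹ := by
    rw [hSdef, tsum_mul_tsum_eq_tsum_sum_range_of_summable_norm hnorm hnorm]
    have hterm : ∀ n : ℕ, ∑ k ∈ Finset.range (n + 1),
        (cb k * z ^ k) * (cb (n - k) * z ^ (n - k)) = (4 * z) ^ n := by
      intro n
      have h1 : ∀ k ∈ Finset.range (n + 1),
          (cb k * z ^ k) * (cb (n - k) * z ^ (n - k)) = (cb k * cb (n - k)) * z ^ n := by
        intro k hk
        have hk' : k ≤ n := by
          have := Finset.mem_range.mp hk; omega
        have : z ^ k * z ^ (n - k) = z ^ n := by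
          rw [← pow_add]; congr 1; omega
        calc (cb k * z ^ k) * (cb (n - k) * z ^ (n - k))
            = (cb k * cb (n - k)) * (z ^ k * z ^ (n - k)) := by ring
          _ = (cb k * cb (n - k)) * z ^ n := by rw [this]
      rw [Finset.sum_congr rfl h1, ← Finset.sum_mul, conv_eq, mul_pow]
    rw [tsum_congr hterm, (hasSum_geometric_of_norm_lt_one h4').tsum_eq]
  -- positivity of S
  have hzsq : ∀ m : ℕ, 0 < z ^ (2 * m) := by
    intro m
    rw [pow_mul]
    positivity
  have hpair : ∀ m : ℕ, 0 < cb (2 * m) * z ^ (2 * m) + cb (2 * m + 1) * z ^ (2 * m + 1) := by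
    intro m
    have h1 : cb (2 * m + 1) * |z| < cb (2 * m) := by
      have := cb_le_four_mul (2 * m)
      nlinarith [cb_pos (2 * m), cb_pos (2 * m + 1), abs_nonneg z]
    have h2 : z ^ (2 * m + 1) = z * z ^ (2 * m) := by ring
    have h3 : -|z| ≤ z := neg_abs_le z
    have h5 : cb (2 * m + 1) * (-|z|) ≤ cb (2 * m + 1) * z :=
      mul_le_mul_of_nonneg_left h3 (cb_pos _).le
    have h6 : (cb (2 * m + 1) * (-|z|)) * z ^ (2 * m) ≤ (cb (2 * m + 1) * z) * z ^ (2 * m) :=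
      mul_le_mul_of_nonneg_right h5 (hzsq m).le
    have h7 : (cb (2 * m + 1) * |z|) * z ^ (2 * m) < cb (2 * m) * z ^ (2 * m) :=
      mul_lt_mul_of_pos_right h1 (hzsq m)
    rw [h2]
    nlinarith [h6, h7]
  have he : Summable (fun m : ℕ => cb (2 * m) * z ^ (2 * m)) :=
    hsum.comp_injective (fun a b h => by omega)
  have ho : Summable (fun m : ℕ => cb (2 * m + 1) * z ^ (2 * m + 1)) :=
    hsum.comp_injective (fun a b h => by omega)
  have hEO : HasSum (fun n : ℕ => cb n * z ^ n)
      ((∑' m, cb (2 * m) * z ^ (2 * m)) + ∑' m, cb (2 * m + 1) * z ^ (2 * m + 1)) :=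
    HasSum.even_add_odd he.hasSum ho.hasSum
  have hSeq : S = (∑' m, cb (2 * m) * z ^ (2 * m)) + ∑' m, cb (2 * m + 1) * z ^ (2 * m + 1) :=
    hEO.tsum_eq
  have hpos : 0 < S := by
    rw [hSeq]
    have hg : HasSum (fun m : ℕ => cb (2 * m) * z ^ (2 * m) + cb (2 * m + 1) * z ^ (2 * m + 1))
        ((∑' m, cb (2 * m) * z ^ (2 * m)) + ∑' m, cb (2 * m + 1) * z ^ (2 * m + 1)) :=
      he.hasSum.add ho.hasSum
    have := le_hasSum hg 0 (fun m _ => (hpair m).le)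
    exact lt_of_lt_of_le (hpair 0) this
  -- identify with rpow
  set R : ℝ := (1 - 4 * z) ^ (-(1 : ℝ) / 2) with hRdef
  have hRpos : 0 < R := Real.rpow_pos_of_pos h1z _
  have hRsq : R * R = (1 - 4 * z)⁻¹ := by
    rw [hRdef, ← Real.rpow_add h1z]
    norm_num
    exact Real.rpow_neg_one _
  have hSR : S = R := by
    have h0 : (S - R) * (S + R) = 0 := by nlinarith
    rcases mul_eq_zero.mp h0 with h | h
    · linarith
    · linarith
  have hS : HasSum (fun n : ℕ => cb n * z ^ n) R := by
    rw [← hSR]; exact hsum.hasSum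
  have hshift : HasSum (fun n : ℕ => cb (n + 1) * z ^ (n + 1)) (R - 1) := by
    rw [hasSum_nat_add_iff (f := fun n : ℕ => cb n * z ^ n) 1]
    have : R - 1 + ∑ i ∈ Finset.range 1, cb i * z ^ i = R := by
      simp [cb, Nat.centralBinom]
    rw [this]
    exact hS
  have heq : (fun x : ℕ => (Nat.choose (2 * x + 1) x : ℝ) * z ^ x)
      = fun x : ℕ => (2 * z)⁻¹ * (cb (x + 1) * z ^ (x + 1)) := by
    funext x
    have h2 : cb (x + 1) = 2 * (Nat.choose (2 * x + 1) x : ℝ) := by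
      unfold cb; exact_mod_cast choose_eq x
    rw [h2]
    field_simp
    ring
  have hmain : HasSum (fun x : ℕ => (Nat.choose (2 * x + 1) x : ℝ) * z ^ x) ((R - 1) / (2 * z)) := by
    rw [heq, show (R - 1) / (2 * z) = (2 * z)⁻¹ * (R - 1) by rw [div_eq_mul_inv, mul_comm]]
    exact hshift.mul_left _
  refine ⟨hmain, ?_⟩
  rw [hmain.tsum_eq]
  field_simp
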